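/- The two-parameter Rényi conditional entropy satisfies the data processing inequality under extra conditioning: let P_XYZ be a probability distribution on 𝒳×𝒴×𝒵. If either α, β ∈ (0,1] or α, β ∈ [1,∞), then H̃_{α,β}(X|YZ)_{P_XYZ} ≤ H̃_{α,β}(X|Y)_{P_XY}, where H̃_{α,β}(X|YZ) is computed treating (Y,Z) as the conditioning variable on 𝒴×𝒵, and P_XY is the marginal of P_XYZ on 𝒳×𝒴. -/

import Mathlib

open scoped BigOperators

noncomputable section

variable {𝓧 𝓨 : Type*} [Fintype 𝓧] [Fintype 𝓨]

/-- Marginal distribution of the second component. -/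
def pY (P : 𝓧 × 𝓨 → ℝ) (y : 𝓨) : ℝ := ∑ x, P (x, y)

/-- Conditional distribution `P_{X|Y}(x|y)`. -/
def pCond (P : 𝓧 × 𝓨 → ℝ) (x : 𝓧) (y : 𝓨) : ℝ := P (x, y) / pY P y

/-- Two-parameter Rényi conditional entropy `H̃_{α,β}(X|Y)` for `α ≠ 1`. -/
def Htilde (P : 𝓧 × 𝓨 → ℝ) (α β : ℝ) : ℝ :=
  α / (β * (1 - α)) *
    Real.logb 2 (∑ y, if 0 < pY P y then
      pY P y * (∑ x, pCond P x y ^ α) ^ (β / α) else 0)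

/-- Shannon conditional entropy `H(X|Y)`. -/
def shannonCond (P : 𝓧 × 𝓨 → ℝ) : ℝ :=
  -∑ p, if 0 < P p then P p * Real.logb 2 (pCond P p.1 p.2) else 0

/-- Two-parameter Rényi conditional entropy, continuously extended at `α = 1`. -/
def HtildeE (P : 𝓧 × 𝓨 → ℝ) (α β : ℝ) : ℝ :=
  if α = 1 then shannonCond P else Htilde P α β


/-- Concave Jensen for `t ↦ t ^ β`, `0 < β ≤ 1`. -/
lemma jensen_concave_rpow {ζ : Type*} (s : Finset ζ) (w t : ζ → ℝ)
    (hw : ∀ z ∈ s, 0 ≤ w z) (hw' : ∑ z ∈ s, w z = 1) (ht : ∀ z ∈ s, 0 ≤ t z)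
    {β : ℝ} (hβ0 : 0 < β) (hβ1 : β ≤ 1) :
    ∑ z ∈ s, w z * t z ^ β ≤ (∑ z ∈ s, w z * t z) ^ β := by
  have hβne : β ≠ 0 := ne_of_gt hβ0
  have hp : (1:ℝ) ≤ 1 / β := by
    rw [le_div_iff₀ hβ0]; linarith
  have h := Real.arith_mean_le_rpow_mean s w (fun z => t z ^ β) hw hw'
      (fun z hz => Real.rpow_nonneg (ht z hz) β) hp
  have h2 : ∀ z ∈ s, w z * (t z ^ β) ^ (1/β) = w z * t z := by
    intro z hz
    rw [one_div, Real.rpow_rpow_inv (ht z hz) hβne]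
  rw [Finset.sum_congr rfl h2, one_div_one_div] at h
  exact h

/-- Minkowski inequality for a finite family, `1 ≤ p`. -/
lemma mink_up {ι ζ : Type*} [Fintype ι] (s : Finset ζ) (v : ζ → ι → ℝ)
    (hv : ∀ z x, 0 ≤ v z x) {p : ℝ} (hp : 1 ≤ p) :
    (∑ x, (∑ z ∈ s, v z x) ^ p) ^ (1/p) ≤ ∑ z ∈ s, (∑ x, v z x ^ p) ^ (1/p) := by
  have hp0 : (0:ℝ) < p := lt_of_lt_of_le one_pos hp
  induction s using Finset.cons_induction with
  | empty =>
      simp only [Finset.sum_empty, Real.zero_rpow (ne_of_gt hp0), Finset.sum_const_zero,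
        Real.zero_rpow (one_div_ne_zero (ne_of_gt hp0)), le_refl]
  | cons a s ha ih =>
      simp only [Finset.sum_cons]
      have e : ∀ (f : ι → ℝ), (∀ x, 0 ≤ f x) → (∑ x, |f x| ^ p) = ∑ x, f x ^ p := by
        intro f hf
        exact Finset.sum_congr rfl fun x _ => by rw [abs_of_nonneg (hf x)]
      have h2 := Real.Lp_add_le Finset.univ (v a) (fun x => ∑ z ∈ s, v z x) hp
      rw [e _ (hv a), e _ (fun x => Finset.sum_nonneg fun z _ => hv z x),
        e _ (fun x => add_nonneg (hv a x) (Finset.sum_nonneg fun z _ => hv z x))] at h2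
      exact h2.trans (add_le_add le_rfl ih)

/-- Reverse Minkowski inequality for a finite family, `0 < p ≤ 1`. -/
lemma mink_down {ι ζ : Type*} [Fintype ι] (s : Finset ζ) (v : ζ → ι → ℝ)
    (hv : ∀ z x, 0 ≤ v z x) {p : ℝ} (hp0 : 0 < p) (hp1 : p ≤ 1) :
    ∑ z ∈ s, (∑ x, v z x ^ p) ^ (1/p) ≤ (∑ x, (∑ z ∈ s, v z x) ^ p) ^ (1/p) := by
  have hpne : p ≠ 0 := ne_of_gt hp0
  set A : ζ → ℝ := fun z => (∑ x, v z x ^ p) ^ (1/p) with hA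
  have hSnn : ∀ z, 0 ≤ ∑ x, v z x ^ p := fun z =>
    Finset.sum_nonneg fun x _ => Real.rpow_nonneg (hv z x) p
  have hA0 : ∀ z, 0 ≤ A z := fun z => Real.rpow_nonneg (hSnn z) _
  have hAp : ∀ z, A z ^ p = ∑ x, v z x ^ p := by
    intro z
    rw [hA]
    rw [one_div, Real.rpow_inv_rpow (hSnn z) hpne]
  have hRHSnn : 0 ≤ (∑ x, (∑ z ∈ s, v z x) ^ p) ^ (1/p) :=
    Real.rpow_nonneg (Finset.sum_nonneg fun x _ =>
      Real.rpow_nonneg (Finset.sum_nonneg fun z _ => hv z x) p) _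
  rcases eq_or_lt_of_le (Finset.sum_nonneg (fun z _ => hA0 z) :
      (0:ℝ) ≤ ∑ z ∈ s, A z) with h0 | hT0
  · exact le_trans h0.symm.le hRHSnn
  set T := ∑ z ∈ s, A z with hT
  have hTne : T ≠ 0 := ne_of_gt hT0
  -- if A z = 0 then v z x = 0
  have hAzero : ∀ z, A z = 0 → ∀ x, v z x = 0 := by
    intro z hz x
    have hsum : ∑ x, v z x ^ p = 0 := by
      rw [hA] at hz
      exact (Real.rpow_eq_zero (hSnn z) (one_div_ne_zero hpne)).mp hz
    have := (Finset.sum_eq_zero_iff_of_nonneg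
      (fun x _ => Real.rpow_nonneg (hv z x) p)).mp hsum x (Finset.mem_univ x)
    exact (Real.rpow_eq_zero (hv z x) hpne).mp this
  -- weights and values
  set w : ζ → ℝ := fun z => A z / T with hw
  set t : ζ → ι → ℝ := fun z x => v z x * T / A z with ht
  have hwnn : ∀ z ∈ s, 0 ≤ w z := fun z _ => div_nonneg (hA0 z) hT0.le
  have hw1 : ∑ z ∈ s, w z = 1 := by
    rw [hw, ← Finset.sum_div, ← hT, div_self hTne]
  have hwt : ∀ z ∈ s, ∀ x, w z * t z x = v z x := by
    intro z _ x
    rcases eq_or_lt_of_le (hA0 z) with hz | hz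
    · simp [hw, ht, ← hz, hAzero z hz.symm x]
    · have hAne : A z ≠ 0 := ne_of_gt hz
      show A z / T * (v z x * T / A z) = v z x
      rw [div_mul_div_comm]
      exact div_eq_of_eq_mul (mul_ne_zero hTne hAne) (by ring)
  -- per-x Jensen
  have key : ∀ x, ∑ z ∈ s, w z * t z x ^ p ≤ (∑ z ∈ s, v z x) ^ p := by
    intro x
    have := jensen_concave_rpow s w (fun z => t z x) hwnn hw1
      (fun z hz => by
        rcases eq_or_lt_of_le (hA0 z) with h' | h'
        · simp [ht, ← h']
        · exact div_nonneg (mul_nonneg (hv z x) hT0.le) (hA0 z)) hp0 hp1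
    calc ∑ z ∈ s, w z * t z x ^ p ≤ (∑ z ∈ s, w z * t z x) ^ p := this
      _ = (∑ z ∈ s, v z x) ^ p := by
          rw [Finset.sum_congr rfl (fun z hz => hwt z hz x)]
  -- sum the per-x inequality over x, swap order
  have hsum : T ^ p ≤ ∑ x, (∑ z ∈ s, v z x) ^ p := by
    have hswap : ∑ x, ∑ z ∈ s, w z * t z x ^ p = ∑ z ∈ s, ∑ x, w z * t z x ^ p :=
      Finset.sum_comm
    have hzval : ∀ z ∈ s, ∑ x, w z * t z x ^ p = A z * T ^ p / T := by
      intro z _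
      rcases eq_or_lt_of_le (hA0 z) with hz | hz
      · simp [hw, ht, ← hz, Real.zero_rpow hpne]
      · have hAne : A z ≠ 0 := ne_of_gt hz
        have e1 : ∀ x, w z * t z x ^ p = (A z / T) * ((T / A z) ^ p * v z x ^ p) := by
          intro x
          rw [hw, ht]
          simp only []
          rw [mul_div_assoc (v z x), Real.mul_rpow (hv z x) (div_nonneg hT0.le (hA0 z))]
          ring
        rw [Finset.sum_congr rfl fun x _ => e1 x, ← Finset.mul_sum, ← Finset.mul_sum, ← hAp z,
          Real.div_rpow hT0.le (hA0 z)]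
        have hApne : A z ^ p ≠ 0 := ne_of_gt (Real.rpow_pos_of_pos hz p)
        field_simp
    have htot : ∑ z ∈ s, ∑ x, w z * t z x ^ p = T ^ p := by
      rw [Finset.sum_congr rfl hzval]
      have : ∀ z ∈ s, A z * T ^ p / T = A z * (T ^ p / T) := fun z _ => by ring
      rw [Finset.sum_congr rfl this, ← Finset.sum_mul, ← hT]
      field_simp
    calc T ^ p = ∑ z ∈ s, ∑ x, w z * t z x ^ p := htot.symm
      _ = ∑ x, ∑ z ∈ s, w z * t z x ^ p := Finset.sum_comm
      _ ≤ ∑ x, (∑ z ∈ s, v z x) ^ p := Finset.sum_le_sum fun x _ => key x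
  calc T = (T ^ p) ^ (1/p) := by rw [one_div, Real.rpow_rpow_inv hT0.le hpne]
    _ ≤ (∑ x, (∑ z ∈ s, v z x) ^ p) ^ (1/p) :=
        Real.rpow_le_rpow (Real.rpow_nonneg hT0.le p) hsum (le_of_lt (one_div_pos.mpr hp0))

/-- Shared computation for the per-fiber inequality. -/
lemma key_core {𝓧 𝓩 : Type*} [Fintype 𝓧] [Fintype 𝓩] (f : 𝓧 → 𝓩 → ℝ)
    (hf : ∀ x z, 0 ≤ f x z) {α β : ℝ} (hα0 : 0 < α) (hβ0 : 0 < β)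
    (hM : 0 < ∑ z, ∑ x, f x z) :
    ∃ (s : Finset 𝓩) (w B : 𝓩 → ℝ),
      (∀ z ∈ s, 0 ≤ w z) ∧ (∑ z ∈ s, w z = 1) ∧ (∀ z ∈ s, 0 ≤ B z) ∧
      (∑ z, (if 0 < ∑ x, f x z then
          (∑ x, f x z) * (∑ x, (f x z / ∑ x', f x' z) ^ α) ^ (β/α) else 0)
        = (∑ z, ∑ x, f x z) * ∑ z ∈ s, w z * B z ^ β) ∧
      ((∑ z, ∑ x, f x z) * (∑ x, ((∑ z, f x z) / ∑ z, ∑ x', f x' z) ^ α) ^ (β/α)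
        = (∑ z, ∑ x, f x z) *
            ((∑ x, (∑ z ∈ s, (fun z x => f x z / ∑ z, ∑ x', f x' z) z x) ^ α) ^ (1/α)) ^ β) ∧
      (∑ z ∈ s, (∑ x, ((fun z x => f x z / ∑ z, ∑ x', f x' z) z x) ^ α) ^ (1/α)
        = ∑ z ∈ s, w z * B z) := by
  classical
  set m : 𝓩 → ℝ := fun z => ∑ x, f x z with hm
  set M : ℝ := ∑ z, ∑ x, f x z with hMdef
  have hMm : M = ∑ z, m z := rfl
  have hMne : M ≠ 0 := ne_of_gt hM
  have hmnn : ∀ z, 0 ≤ m z := fun z => Finset.sum_nonneg fun x _ => hf x z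
  set s : Finset 𝓩 := Finset.univ.filter (fun z => 0 < m z) with hs
  have hms : ∀ z ∈ s, 0 < m z := fun z hz => (Finset.mem_filter.mp hz).2
  have hm0 : ∀ z ∉ s, m z = 0 := by
    intro z hz
    have : ¬ 0 < m z := fun h => hz (Finset.mem_filter.mpr ⟨Finset.mem_univ z, h⟩)
    linarith [hmnn z, not_lt.mp this]
  have hf0 : ∀ z ∉ s, ∀ x, f x z = 0 := by
    intro z hz x
    have := (Finset.sum_eq_zero_iff_of_nonneg (fun x _ => hf x z)).mp (hm0 z hz) x
      (Finset.mem_univ x)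
    exact this
  set w : 𝓩 → ℝ := fun z => m z / M with hw
  set B : 𝓩 → ℝ := fun z => (∑ x, (f x z / m z) ^ α) ^ (1/α) with hB
  have hwnn : ∀ z ∈ s, 0 ≤ w z := fun z hz => div_nonneg (hmnn z) hM.le
  have hsum_s : ∑ z ∈ s, m z = M := by
    rw [hMm]
    exact Finset.sum_subset (Finset.subset_univ s) (fun z _ hz => hm0 z hz)
  have hw1 : ∑ z ∈ s, w z = 1 := by
    rw [hw]; simp only []
    rw [← Finset.sum_div, hsum_s, div_self hMne]
  have hBnn : ∀ z ∈ s, 0 ≤ B z := fun z _ => Real.rpow_nonneg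
    (Finset.sum_nonneg fun x _ => Real.rpow_nonneg (div_nonneg (hf x z) (hmnn z)) α) _
  refine ⟨s, w, B, hwnn, hw1, hBnn, ?_, ?_, ?_⟩
  · -- LHS equality
    rw [← Finset.sum_filter, ← hs]
    rw [Finset.mul_sum]
    refine Finset.sum_congr rfl fun z hz => ?_
    have hmz := hms z hz
    have hNz : (∑ x, (f x z / m z) ^ α) ^ (β/α) = B z ^ β := by
      rw [hB]; simp only []
      rw [← Real.rpow_mul (Finset.sum_nonneg fun x _ =>
        Real.rpow_nonneg (div_nonneg (hf x z) (hmnn z)) α), one_div_mul_eq_div]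
    rw [hNz]
    rw [hw]; simp only []
    field_simp
    exact mul_comm _ _
  · -- RHS equality
    congr 1
    have hg : ∀ x, ∑ z ∈ s, f x z / M = (∑ z, f x z) / M := by
      intro x
      rw [← Finset.sum_div]
      congr 1
      exact Finset.sum_subset (Finset.subset_univ s) (fun z _ hz => hf0 z hz x)
    have hb : (∑ x, (∑ z ∈ s, (fun z x => f x z / M) z x) ^ α)
        = ∑ x, ((∑ z, f x z) / M) ^ α := by
      refine Finset.sum_congr rfl fun x _ => ?_
      simp only []
      rw [hg x]
    rw [hb, ← Real.rpow_mul (Finset.sum_nonneg fun x _ =>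
      Real.rpow_nonneg (div_nonneg (Finset.sum_nonneg fun z _ => hf x z) hM.le) α),
      one_div_mul_eq_div]
  · -- Minkowski LHS equality
    refine Finset.sum_congr rfl fun z hz => ?_
    have hmz := hms z hz
    have hvd : ∀ x, f x z / M = w z * (f x z / m z) := by
      intro x
      rw [hw]; simp only []
      field_simp
    simp only []
    rw [Finset.sum_congr rfl fun x _ => by rw [hvd x]]
    have : ∀ x, (w z * (f x z / m z)) ^ α = w z ^ α * (f x z / m z) ^ α := fun x =>
      Real.mul_rpow (div_nonneg (hmnn z) hM.le) (div_nonneg (hf x z) (hmnn z))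
    rw [Finset.sum_congr rfl fun x _ => by rw [this x], ← Finset.mul_sum]
    rw [Real.mul_rpow (Real.rpow_nonneg (div_nonneg (hmnn z) hM.le) α)
      (Finset.sum_nonneg fun x _ => Real.rpow_nonneg (div_nonneg (hf x z) (hmnn z)) α)]
    rw [← Real.rpow_mul (div_nonneg (hmnn z) hM.le), mul_one_div, div_self (ne_of_gt hα0),
      Real.rpow_one]

lemma zero_case {𝓧 𝓩 : Type*} [Fintype 𝓧] [Fintype 𝓩] (f : 𝓧 → 𝓩 → ℝ)
    (hf : ∀ x z, 0 ≤ f x z) {α β : ℝ} (hM : ¬ 0 < ∑ z, ∑ x, f x z) :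
    ∑ z, (if 0 < ∑ x, f x z then
        (∑ x, f x z) * (∑ x, (f x z / ∑ x', f x' z) ^ α) ^ (β/α) else 0) = 0 := by
  have hnn : (0:ℝ) ≤ ∑ z, ∑ x, f x z :=
    Finset.sum_nonneg fun z _ => Finset.sum_nonneg fun x _ => hf x z
  have hM0 : ∑ z, ∑ x, f x z = 0 := le_antisymm (not_lt.mp hM) hnn
  have hz : ∀ z : 𝓩, ¬ 0 < ∑ x, f x z := by
    intro z
    have := (Finset.sum_eq_zero_iff_of_nonneg
      (fun z _ => Finset.sum_nonneg fun x _ => hf x z)).mp hM0 z (Finset.mem_univ z)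
    rw [this]
    exact lt_irrefl 0
  exact Finset.sum_eq_zero fun z _ => if_neg (hz z)

lemma key_down {𝓧 𝓩 : Type*} [Fintype 𝓧] [Fintype 𝓩] (f : 𝓧 → 𝓩 → ℝ)
    (hf : ∀ x z, 0 ≤ f x z) {α β : ℝ} (hα0 : 0 < α) (hα1 : α ≤ 1)
    (hβ0 : 0 < β) (hβ1 : β ≤ 1) :
    ∑ z, (if 0 < ∑ x, f x z then
        (∑ x, f x z) * (∑ x, (f x z / ∑ x', f x' z) ^ α) ^ (β/α) else 0) ≤
      (if 0 < ∑ z, ∑ x, f x z then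
        (∑ z, ∑ x, f x z) * (∑ x, ((∑ z, f x z) / ∑ z, ∑ x', f x' z) ^ α) ^ (β/α) else 0) := by
  by_cases hM : 0 < ∑ z, ∑ x, f x z
  · rw [if_pos hM]
    obtain ⟨s, w, B, hwnn, hw1, hBnn, hL, hR, hMk⟩ := key_core f hf hα0 hβ0 hM
    rw [hL, hR]
    refine mul_le_mul_of_nonneg_left ?_ hM.le
    have h1 : ∑ z ∈ s, w z * B z ^ β ≤ (∑ z ∈ s, w z * B z) ^ β :=
      jensen_concave_rpow s w B hwnn hw1 hBnn hβ0 hβ1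
    have h2 : ∑ z ∈ s, w z * B z ≤
        (∑ x, (∑ z ∈ s, (fun z x => f x z / ∑ z, ∑ x', f x' z) z x) ^ α) ^ (1/α) := by
      rw [← hMk]
      exact mink_down s _ (fun z x => div_nonneg (hf x z)
        (Finset.sum_nonneg fun z _ => Finset.sum_nonneg fun x _ => hf x z)) hα0 hα1
    refine h1.trans (Real.rpow_le_rpow
      (Finset.sum_nonneg fun z hz => mul_nonneg (hwnn z hz) (hBnn z hz)) h2 hβ0.le)
  · rw [if_neg hM, zero_case f hf hM]

lemma key_up {𝓧 𝓩 : Type*} [Fintype 𝓧] [Fintype 𝓩] (f : 𝓧 → 𝓩 → ℝ)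
    (hf : ∀ x z, 0 ≤ f x z) {α β : ℝ} (hα1 : 1 ≤ α) (hβ1 : 1 ≤ β) :
    (if 0 < ∑ z, ∑ x, f x z then
        (∑ z, ∑ x, f x z) * (∑ x, ((∑ z, f x z) / ∑ z, ∑ x', f x' z) ^ α) ^ (β/α) else 0) ≤
      ∑ z, (if 0 < ∑ x, f x z then
        (∑ x, f x z) * (∑ x, (f x z / ∑ x', f x' z) ^ α) ^ (β/α) else 0) := by
  have hα0 : (0:ℝ) < α := lt_of_lt_of_le one_pos hα1
  have hβ0 : (0:ℝ) < β := lt_of_lt_of_le one_pos hβ1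
  by_cases hM : 0 < ∑ z, ∑ x, f x z
  · rw [if_pos hM]
    obtain ⟨s, w, B, hwnn, hw1, hBnn, hL, hR, hMk⟩ := key_core f hf hα0 hβ0 hM
    rw [hL, hR]
    refine mul_le_mul_of_nonneg_left ?_ hM.le
    have h1 : (∑ z ∈ s, w z * B z) ^ β ≤ ∑ z ∈ s, w z * B z ^ β :=
      Real.rpow_arith_mean_le_arith_mean_rpow s w B hwnn hw1 hBnn hβ1
    have h2 : (∑ x, (∑ z ∈ s, (fun z x => f x z / ∑ z, ∑ x', f x' z) z x) ^ α) ^ (1/α) ≤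
        ∑ z ∈ s, w z * B z := by
      rw [← hMk]
      exact mink_up s _ (fun z x => div_nonneg (hf x z)
        (Finset.sum_nonneg fun z _ => Finset.sum_nonneg fun x _ => hf x z)) hα1
    refine le_trans (Real.rpow_le_rpow ?_ h2 hβ0.le) h1
    exact Real.rpow_nonneg (Finset.sum_nonneg fun x _ => Real.rpow_nonneg
      (Finset.sum_nonneg fun z _ => div_nonneg (hf x z)
        (Finset.sum_nonneg fun z _ => Finset.sum_nonneg fun x _ => hf x z)) α) _
  · rw [if_neg hM, zero_case f hf hM]

/-- Shannon conditional entropy decreases under extra conditioning. -/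
lemma shannon_le {𝓧 𝓨 𝓩 : Type*} [Fintype 𝓧] [Fintype 𝓨] [Fintype 𝓩]
    (P : 𝓧 × 𝓨 × 𝓩 → ℝ) (hP : ∀ p, 0 ≤ P p) (hPsum : ∑ p, P p = 1) :
    shannonCond (fun p : 𝓧 × (𝓨 × 𝓩) => P (p.1, p.2.1, p.2.2)) ≤
      shannonCond (fun q : 𝓧 × 𝓨 => ∑ z, P (q.1, q.2, z)) := by
  classical
  set Q : 𝓧 × (𝓨 × 𝓩) → ℝ := fun p => P (p.1, p.2.1, p.2.2) with hQdef
  set R : 𝓧 × 𝓨 → ℝ := fun q => ∑ z, P (q.1, q.2, z) with hRdef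
  have hRnn : ∀ q, 0 ≤ R q := fun q => Finset.sum_nonneg fun z _ => hP _
  rw [shannonCond, shannonCond, neg_le_neg_iff]
  -- rewrite the R-side sum as a triple sum over x, y, z
  have hTR : (∑ q : 𝓧 × 𝓨, if 0 < R q then R q * Real.logb 2 (pCond R q.1 q.2) else 0)
      = ∑ x, ∑ y, ∑ z, (if 0 < P (x, y, z) then
          P (x, y, z) * Real.logb 2 (pCond R x y) else 0) := by
    rw [Fintype.sum_prod_type]
    refine Finset.sum_congr rfl fun x _ => Finset.sum_congr rfl fun y _ => ?_
    by_cases h : 0 < R (x, y)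
    · rw [if_pos h]
      have h1 : R (x, y) * Real.logb 2 (pCond R x y)
          = ∑ z, P (x, y, z) * Real.logb 2 (pCond R x y) := by
        rw [← Finset.sum_mul]
      rw [h1]
      refine Finset.sum_congr rfl fun z _ => ?_
      by_cases hz : 0 < P (x, y, z)
      · rw [if_pos hz]
      · have : P (x, y, z) = 0 := le_antisymm (not_lt.mp hz) (hP _)
        rw [if_neg hz, this, zero_mul]
    · rw [if_neg h]
      have hR0 : R (x, y) = 0 := le_antisymm (not_lt.mp h) (hRnn _)
      have hz : ∀ z, P (x, y, z) = 0 := fun z =>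
        (Finset.sum_eq_zero_iff_of_nonneg (fun z _ => hP _)).mp hR0 z (Finset.mem_univ z)
      refine (Finset.sum_eq_zero fun z _ => if_neg ?_).symm
      rw [hz z]
      exact lt_irrefl 0
  have hTQ : (∑ p : 𝓧 × (𝓨 × 𝓩), if 0 < Q p then Q p * Real.logb 2 (pCond Q p.1 p.2) else 0)
      = ∑ x, ∑ y, ∑ z, (if 0 < P (x, y, z) then
          P (x, y, z) * Real.logb 2 (pCond Q x (y, z)) else 0) := by
    rw [Fintype.sum_prod_type]
    refine Finset.sum_congr rfl fun x _ => ?_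
    rw [Fintype.sum_prod_type]
  rw [hTR, hTQ, ← sub_nonpos]
  simp only [← Finset.sum_sub_distrib]
  -- bound each term
  have hlog2 : (0:ℝ) < Real.log 2 := Real.log_pos one_lt_two
  have hbound : ∀ x y z,
      ((if 0 < P (x, y, z) then P (x, y, z) * Real.logb 2 (pCond R x y) else 0)
        - (if 0 < P (x, y, z) then P (x, y, z) * Real.logb 2 (pCond Q x (y, z)) else 0))
      ≤ ((if 0 < P (x, y, z) then pY Q (y, z) * pCond R x y else 0)
          - (if 0 < P (x, y, z) then P (x, y, z) else 0)) / Real.log 2 := by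
    intro x y z
    by_cases h : 0 < P (x, y, z)
    · rw [if_pos h, if_pos h, if_pos h, if_pos h, ← mul_sub]
      have hpyz : 0 < pY Q (y, z) := by
        have : P (x, y, z) ≤ pY Q (y, z) :=
          Finset.single_le_sum (f := fun x' => Q (x', (y, z))) (fun x' _ => hP _)
            (Finset.mem_univ x)
        linarith
      have hq : pCond Q x (y, z) = P (x, y, z) / pY Q (y, z) := rfl
      have hqpos : 0 < pCond Q x (y, z) := by rw [hq]; exact div_pos h hpyz
      have hRxy : 0 < R (x, y) := by
        have : P (x, y, z) ≤ R (x, y) :=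
          Finset.single_le_sum (f := fun z' => P (x, y, z')) (fun z' _ => hP _)
            (Finset.mem_univ z)
        linarith
      have hpyR : 0 < pY R y := by
        have : R (x, y) ≤ pY R y :=
          Finset.single_le_sum (f := fun x' => R (x', y)) (fun x' _ => hRnn _)
            (Finset.mem_univ x)
        linarith
      have hrpos : 0 < pCond R x y := div_pos hRxy hpyR
      have hdiff : Real.logb 2 (pCond R x y) - Real.logb 2 (pCond Q x (y, z))
          = Real.log (pCond R x y / pCond Q x (y, z)) / Real.log 2 := by
        rw [Real.logb, Real.logb, div_sub_div_same,
          Real.log_div (ne_of_gt hrpos) (ne_of_gt hqpos)]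
      rw [hdiff]
      have hle : Real.log (pCond R x y / pCond Q x (y, z))
          ≤ pCond R x y / pCond Q x (y, z) - 1 :=
        Real.log_le_sub_one_of_pos (div_pos hrpos hqpos)
      have step1 : P (x, y, z) * (Real.log (pCond R x y / pCond Q x (y, z)) / Real.log 2)
          ≤ P (x, y, z) * ((pCond R x y / pCond Q x (y, z) - 1) / Real.log 2) := by
        refine mul_le_mul_of_nonneg_left ?_ (hP _)
        exact (div_le_div_iff_of_pos_right hlog2).mpr hle
      refine step1.trans (le_of_eq ?_)
      rw [hq]
      field_simp
    · rw [if_neg h, if_neg h, if_neg h, if_neg h]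
      simp
  have hsum_le : ∑ x, ∑ y, ∑ z,
      ((if 0 < P (x, y, z) then P (x, y, z) * Real.logb 2 (pCond R x y) else 0)
        - (if 0 < P (x, y, z) then P (x, y, z) * Real.logb 2 (pCond Q x (y, z)) else 0))
      ≤ ∑ x, ∑ y, ∑ z,
        ((if 0 < P (x, y, z) then pY Q (y, z) * pCond R x y else 0)
          - (if 0 < P (x, y, z) then P (x, y, z) else 0)) / Real.log 2 :=
    Finset.sum_le_sum fun x _ => Finset.sum_le_sum fun y _ =>
      Finset.sum_le_sum fun z _ => hbound x y z
  refine le_trans hsum_le ?_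
  -- now bound the RHS by 0
  simp only [← Finset.sum_div]
  apply div_nonpos_of_nonpos_of_nonneg _ hlog2.le
  simp only [Finset.sum_sub_distrib]
  rw [sub_nonpos]
  have hSB : ∑ x, ∑ y, ∑ z, (if 0 < P (x, y, z) then P (x, y, z) else 0) = 1 := by
    have e : ∀ (x : 𝓧) (y : 𝓨) (z : 𝓩),
        (if 0 < P (x, y, z) then P (x, y, z) else 0) = P (x, y, z) := by
      intro x y z
      by_cases h : 0 < P (x, y, z)
      · rw [if_pos h]
      · rw [if_neg h, le_antisymm (not_lt.mp h) (hP _)]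
    simp only [e]
    rw [← hPsum, Fintype.sum_prod_type]
    exact Finset.sum_congr rfl fun x _ =>
      (Fintype.sum_prod_type (f := fun q : 𝓨 × 𝓩 => P (x, q.1, q.2))).symm
  rw [hSB]
  -- SA ≤ 1
  have hrnn : ∀ x y, 0 ≤ pCond R x y := fun x y => div_nonneg (hRnn _)
    (Finset.sum_nonneg fun x' _ => hRnn _)
  have hpyznn : ∀ y z, 0 ≤ pY Q (y, z) := fun y z => Finset.sum_nonneg fun x _ => hP _
  have step2 : ∑ x, ∑ y, ∑ z, (if 0 < P (x, y, z) then pY Q (y, z) * pCond R x y else 0)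
      ≤ ∑ x, ∑ y, ∑ z, pY Q (y, z) * pCond R x y := by
    refine Finset.sum_le_sum fun x _ => Finset.sum_le_sum fun y _ =>
      Finset.sum_le_sum fun z _ => ?_
    by_cases h : 0 < P (x, y, z)
    · rw [if_pos h]
    · rw [if_neg h]
      exact mul_nonneg (hpyznn y z) (hrnn x y)
  refine le_trans step2 ?_
  have hswap : ∑ x, ∑ y, ∑ z, pY Q (y, z) * pCond R x y
      = ∑ y, ∑ z, pY Q (y, z) * ∑ x, pCond R x y := by
    rw [Finset.sum_comm]
    refine Finset.sum_congr rfl fun y _ => ?_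
    rw [Finset.sum_comm]
    exact Finset.sum_congr rfl fun z _ => (Finset.mul_sum _ _ _).symm
  rw [hswap]
  have hrow : ∀ y, ∑ x, pCond R x y ≤ 1 := by
    intro y
    by_cases h : 0 < pY R y
    · have : ∑ x, pCond R x y = (∑ x, R (x, y)) / pY R y := by
        rw [Finset.sum_div]
        rfl
      rw [this]
      have : (∑ x, R (x, y)) = pY R y := rfl
      rw [this, div_self (ne_of_gt h)]
    · have h0 : pY R y = 0 := le_antisymm (not_lt.mp h)
        (Finset.sum_nonneg fun x _ => hRnn _)
      have : ∀ x, pCond R x y = 0 := by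
        intro x
        rw [pCond, h0, div_zero]
      simp only [this, Finset.sum_const_zero]
      exact zero_le_one
  calc ∑ y, ∑ z, pY Q (y, z) * ∑ x, pCond R x y
      ≤ ∑ y, ∑ z, pY Q (y, z) * 1 :=
        Finset.sum_le_sum fun y _ => Finset.sum_le_sum fun z _ =>
          mul_le_mul_of_nonneg_left (hrow y) (hpyznn y z)
    _ = 1 := by
        simp only [mul_one]
        calc ∑ y, ∑ z, pY Q (y, z) = ∑ yz : 𝓨 × 𝓩, pY Q yz :=
              (Fintype.sum_prod_type (f := pY Q)).symm
          _ = ∑ yz : 𝓨 × 𝓩, ∑ x, Q (x, yz) := rfl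
          _ = ∑ x, ∑ yz : 𝓨 × 𝓩, Q (x, yz) := Finset.sum_comm
          _ = ∑ p, Q p := (Fintype.sum_prod_type (f := Q)).symm
          _ = 1 := hPsum

/-- data processing inequality under extra conditioning:
`H̃_{α,β}(X|YZ) ≤ H̃_{α,β}(X|Y)` for `α, β ∈ (0,1]` or `α, β ∈ [1,∞)`. -/
theorem HtildeE_extra_conditioning
    {𝓩 : Type*} [Fintype 𝓩] [Nonempty 𝓧] [Nonempty 𝓨] [Nonempty 𝓩]
    (P : 𝓧 × 𝓨 × 𝓩 → ℝ) (hP : ∀ p, 0 ≤ P p) (hPsum : ∑ p, P p = 1)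
    (α β : ℝ)
    (h : (0 < α ∧ α ≤ 1 ∧ 0 < β ∧ β ≤ 1) ∨ (1 ≤ α ∧ 1 ≤ β)) :
    HtildeE (fun p : 𝓧 × (𝓨 × 𝓩) => P (p.1, p.2.1, p.2.2)) α β ≤
      HtildeE (fun q : 𝓧 × 𝓨 => ∑ z, P (q.1, q.2, z)) α β := by
  classical
  by_cases hα : α = 1
  · subst hα
    unfold HtildeE
    rw [if_pos rfl, if_pos rfl]
    exact shannon_le P hP hPsum
  have hα0 : 0 < α := by rcases h with ⟨h1, _, _, _⟩ | ⟨h1, _⟩ <;> linarith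
  have hβ0 : 0 < β := by rcases h with ⟨_, _, h1, _⟩ | ⟨_, h1⟩ <;> linarith
  obtain ⟨⟨x0, y0, z0⟩, hp0⟩ : ∃ p, 0 < P p := by
    by_contra hc
    push_neg at hc
    have h0 : ∑ p, P p = 0 := Finset.sum_eq_zero fun p _ => le_antisymm (hc p) (hP p)
    rw [hPsum] at h0
    exact one_ne_zero h0
  unfold HtildeE Htilde
  rw [if_neg hα, if_neg hα]
  set Q : 𝓧 × (𝓨 × 𝓩) → ℝ := fun p => P (p.1, p.2.1, p.2.2) with hQdef
  set R : 𝓧 × 𝓨 → ℝ := fun q => ∑ z, P (q.1, q.2, z) with hRdef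
  have hSQ : (∑ y : 𝓨 × 𝓩, if 0 < pY Q y then
        pY Q y * (∑ x, pCond Q x y ^ α) ^ (β / α) else 0)
      = ∑ y, ∑ z, (if 0 < ∑ x, P (x, y, z) then
          (∑ x, P (x, y, z)) *
            (∑ x, (P (x, y, z) / ∑ x', P (x', y, z)) ^ α) ^ (β / α) else 0) := by
    rw [Fintype.sum_prod_type]
    rfl
  have hSR : (∑ y : 𝓨, if 0 < pY R y then
        pY R y * (∑ x, pCond R x y ^ α) ^ (β / α) else 0)
      = ∑ y, (if 0 < ∑ z, ∑ x, P (x, y, z) then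
          (∑ z, ∑ x, P (x, y, z)) *
            (∑ x, ((∑ z, P (x, y, z)) / ∑ z, ∑ x', P (x', y, z)) ^ α) ^ (β / α) else 0) := by
    refine Finset.sum_congr rfl fun y _ => ?_
    have hM : pY R y = ∑ z, ∑ x, P (x, y, z) := by
      show (∑ x, ∑ z, P (x, y, z)) = ∑ z, ∑ x, P (x, y, z)
      exact Finset.sum_comm
    have hc : ∀ x, pCond R x y
        = (∑ z, P (x, y, z)) / ∑ z, ∑ x', P (x', y, z) := by
      intro x
      show (∑ z, P (x, y, z)) / pY R y = _
      rw [hM]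
    have he : (∑ x, pCond R x y ^ α)
        = ∑ x, ((∑ z, P (x, y, z)) / ∑ z, ∑ x', P (x', y, z)) ^ α :=
      Finset.sum_congr rfl fun x _ => by rw [hc x]
    rw [hM, he]
  rw [hSQ, hSR]
  -- positivity of the two sums
  have htermQnn : ∀ y z, (0:ℝ) ≤ (if 0 < ∑ x, P (x, y, z) then
      (∑ x, P (x, y, z)) *
        (∑ x, (P (x, y, z) / ∑ x', P (x', y, z)) ^ α) ^ (β / α) else 0) := by
    intro y z
    by_cases hc : 0 < ∑ x, P (x, y, z)
    · rw [if_pos hc]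
      exact mul_nonneg hc.le (Real.rpow_nonneg (Finset.sum_nonneg fun x _ =>
        Real.rpow_nonneg (div_nonneg (hP _) hc.le) α) _)
    · rw [if_neg hc]
  have htermRnn : ∀ y, (0:ℝ) ≤ (if 0 < ∑ z, ∑ x, P (x, y, z) then
      (∑ z, ∑ x, P (x, y, z)) *
        (∑ x, ((∑ z, P (x, y, z)) / ∑ z, ∑ x', P (x', y, z)) ^ α) ^ (β / α) else 0) := by
    intro y
    by_cases hc : 0 < ∑ z, ∑ x, P (x, y, z)
    · rw [if_pos hc]
      refine mul_nonneg hc.le (Real.rpow_nonneg (Finset.sum_nonneg fun x _ =>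
        Real.rpow_nonneg (div_nonneg (Finset.sum_nonneg fun z _ => hP _) hc.le) α) _)
    · rw [if_neg hc]
  have hm0 : 0 < ∑ x, P (x, y0, z0) :=
    lt_of_lt_of_le hp0 (Finset.single_le_sum (f := fun x => P (x, y0, z0))
      (fun x _ => hP _) (Finset.mem_univ x0))
  have hSQpos : 0 < ∑ y, ∑ z, (if 0 < ∑ x, P (x, y, z) then
      (∑ x, P (x, y, z)) *
        (∑ x, (P (x, y, z) / ∑ x', P (x', y, z)) ^ α) ^ (β / α) else 0) := by
    refine Finset.sum_pos' (fun y _ => Finset.sum_nonneg fun z _ => htermQnn y z)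
      ⟨y0, Finset.mem_univ y0, Finset.sum_pos' (fun z _ => htermQnn y0 z)
        ⟨z0, Finset.mem_univ z0, ?_⟩⟩
    rw [if_pos hm0]
    refine mul_pos hm0 (Real.rpow_pos_of_pos ?_ _)
    refine Finset.sum_pos' (fun x _ => Real.rpow_nonneg (div_nonneg (hP _) hm0.le) α)
      ⟨x0, Finset.mem_univ x0, Real.rpow_pos_of_pos (div_pos hp0 hm0) α⟩
  have hMpos : 0 < ∑ z, ∑ x, P (x, y0, z) :=
    lt_of_lt_of_le hm0 (Finset.single_le_sum (f := fun z => ∑ x, P (x, y0, z))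
      (fun z _ => Finset.sum_nonneg fun x _ => hP _) (Finset.mem_univ z0))
  have hSRpos : 0 < ∑ y, (if 0 < ∑ z, ∑ x, P (x, y, z) then
      (∑ z, ∑ x, P (x, y, z)) *
        (∑ x, ((∑ z, P (x, y, z)) / ∑ z, ∑ x', P (x', y, z)) ^ α) ^ (β / α) else 0) := by
    refine Finset.sum_pos' (fun y _ => htermRnn y) ⟨y0, Finset.mem_univ y0, ?_⟩
    rw [if_pos hMpos]
    refine mul_pos hMpos (Real.rpow_pos_of_pos ?_ _)
    have hx0 : 0 < ∑ z, P (x0, y0, z) :=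
      lt_of_lt_of_le hp0 (Finset.single_le_sum (f := fun z => P (x0, y0, z))
        (fun z _ => hP _) (Finset.mem_univ z0))
    refine Finset.sum_pos' (fun x _ => Real.rpow_nonneg
        (div_nonneg (Finset.sum_nonneg fun z _ => hP _) hMpos.le) α)
      ⟨x0, Finset.mem_univ x0, Real.rpow_pos_of_pos (div_pos hx0 hMpos) α⟩
  rcases h with ⟨_, hα1, _, hβ1⟩ | ⟨hα1, hβ1⟩
  · -- case α, β ∈ (0, 1]
    have hS : (∑ y, ∑ z, (if 0 < ∑ x, P (x, y, z) then
          (∑ x, P (x, y, z)) *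
            (∑ x, (P (x, y, z) / ∑ x', P (x', y, z)) ^ α) ^ (β / α) else 0))
        ≤ ∑ y, (if 0 < ∑ z, ∑ x, P (x, y, z) then
          (∑ z, ∑ x, P (x, y, z)) *
            (∑ x, ((∑ z, P (x, y, z)) / ∑ z, ∑ x', P (x', y, z)) ^ α) ^ (β / α) else 0) :=
      Finset.sum_le_sum fun y _ =>
        key_down (fun x z => P (x, y, z)) (fun x z => hP _) hα0 hα1 hβ0 hβ1
    have hcoef : 0 ≤ α / (β * (1 - α)) := by
      have h1 : 0 < 1 - α := by
        have := lt_of_le_of_ne hα1 hα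
        linarith
      positivity
    exact mul_le_mul_of_nonneg_left
      (Real.logb_le_logb_of_le one_lt_two hSQpos hS) hcoef
  · -- case α, β ∈ [1, ∞)
    have hS : (∑ y, (if 0 < ∑ z, ∑ x, P (x, y, z) then
          (∑ z, ∑ x, P (x, y, z)) *
            (∑ x, ((∑ z, P (x, y, z)) / ∑ z, ∑ x', P (x', y, z)) ^ α) ^ (β / α) else 0))
        ≤ ∑ y, ∑ z, (if 0 < ∑ x, P (x, y, z) then
          (∑ x, P (x, y, z)) *
            (∑ x, (P (x, y, z) / ∑ x', P (x', y, z)) ^ α) ^ (β / α) else 0) :=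
      Finset.sum_le_sum fun y _ =>
        key_up (fun x z => P (x, y, z)) (fun x z => hP _) hα1 hβ1
    have hcoef : α / (β * (1 - α)) ≤ 0 := by
      have h1 : 1 - α < 0 := by
        have := lt_of_le_of_ne hα1 (Ne.symm hα)
        linarith
      exact le_of_lt (div_neg_of_pos_of_neg hα0 (mul_neg_of_pos_of_neg hβ0 h1))
    exact mul_le_mul_of_nonpos_left
      (Real.logb_le_logb_of_le one_lt_two hSRpos hS) hcoef
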